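/- Let m be a positive integer and let u : [0,∞) → ℝ^m be three times continuously differentiable with u', u'', u''' square integrable on (0,∞), u'(0) = 0, and u'(x)·u''(x) → 0 as x → ∞. Then ∫₀^∞ |u''(x)|² dx ≤ (∫₀^∞ |u'(x)|² dx)^{1/2} · (∫₀^∞ |u'''(x)|² dx)^{1/2}. -/

import Mathlib

open MeasureTheory Filter Set

/-- Interpolation inequality on the half line: for `u : [0,∞) → ℝᵐ` three times
continuously differentiable with `u', u'', u'''` square integrable, `u'(0) = 0` and
`u'(x)·u''(x) → 0` as `x → ∞`, one has `‖u''‖² ≤ ‖u'‖·‖u'''‖` (squared `L²` norms). -/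
theorem stmt14 (m : ℕ) (hm : 0 < m)
    (u u1 u2 u3 : ℝ → EuclideanSpace ℝ (Fin m))
    (hd1 : ∀ x ∈ Ici (0 : ℝ), HasDerivWithinAt u (u1 x) (Ici 0) x)
    (hd2 : ∀ x ∈ Ici (0 : ℝ), HasDerivWithinAt u1 (u2 x) (Ici 0) x)
    (hd3 : ∀ x ∈ Ici (0 : ℝ), HasDerivWithinAt u2 (u3 x) (Ici 0) x)
    (hc3 : ContinuousOn u3 (Ici 0))
    (h1 : IntegrableOn (fun x => ‖u1 x‖ ^ 2) (Ioi 0))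
    (h2 : IntegrableOn (fun x => ‖u2 x‖ ^ 2) (Ioi 0))
    (h3 : IntegrableOn (fun x => ‖u3 x‖ ^ 2) (Ioi 0))
    (hbc : u1 0 = 0)
    (hdec : Tendsto (fun x => (inner ℝ (u1 x) (u2 x) : ℝ)) atTop (nhds 0)) :
    (∫ x in Ioi (0 : ℝ), ‖u2 x‖ ^ 2)
      ≤ Real.sqrt (∫ x in Ioi (0 : ℝ), ‖u1 x‖ ^ 2)
        * Real.sqrt (∫ x in Ioi (0 : ℝ), ‖u3 x‖ ^ 2) := by
  set μ := volume.restrict (Ioi (0 : ℝ)) with hμ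
  have hcu1 : ContinuousOn u1 (Ici (0:ℝ)) := fun x hx =>
    (hd2 x hx).differentiableWithinAt.continuousWithinAt
  have hcu2 : ContinuousOn u2 (Ici (0:ℝ)) := fun x hx =>
    (hd3 x hx).differentiableWithinAt.continuousWithinAt
  have hm1 : AEStronglyMeasurable u1 μ :=
    (hcu1.mono Ioi_subset_Ici_self).aestronglyMeasurable measurableSet_Ioi
  have hm3 : AEStronglyMeasurable u3 μ :=
    (hc3.mono Ioi_subset_Ici_self).aestronglyMeasurable measurableSet_Ioi
  have hmul : Integrable (fun x => ‖u1 x‖ * ‖u3 x‖) μ := by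
    refine (h1.add h3).mono' (hm1.norm.mul hm3.norm) ?_
    filter_upwards with x
    have h := sq_nonneg (‖u1 x‖ - ‖u3 x‖)
    have h1' : (0:ℝ) ≤ ‖u1 x‖ * ‖u3 x‖ := mul_nonneg (norm_nonneg _) (norm_nonneg _)
    rw [Real.norm_of_nonneg h1']
    simp only [Pi.add_apply]
    nlinarith
  have hminner : AEStronglyMeasurable (fun x => (inner ℝ (u1 x) (u3 x) : ℝ)) μ :=
    ((hcu1.mono Ioi_subset_Ici_self).inner
      (hc3.mono Ioi_subset_Ici_self)).aestronglyMeasurable measurableSet_Ioi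
  have hinner : Integrable (fun x => (inner ℝ (u1 x) (u3 x) : ℝ)) μ := by
    refine hmul.mono' hminner ?_
    filter_upwards with x
    rw [Real.norm_eq_abs]
    exact abs_real_inner_le_norm _ _
  -- integration by parts
  set F : ℝ → ℝ := fun x => (inner ℝ (u1 x) (u2 x) : ℝ) with hF
  set g : ℝ → ℝ := fun x => ‖u2 x‖ ^ 2 + (inner ℝ (u1 x) (u3 x) : ℝ) with hg
  have hgint : IntegrableOn g (Ioi (0:ℝ)) := h2.add hinner
  have hFderiv : ∀ x ∈ Ioi (0:ℝ), HasDerivAt F (g x) x := by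
    intro x hx
    have hx' : (0:ℝ) ≤ x := le_of_lt hx
    have hnb : Ici (0:ℝ) ∈ nhds x := Ici_mem_nhds hx
    have h2' : HasDerivAt u1 (u2 x) x := (hd2 x hx').hasDerivAt hnb
    have h3' : HasDerivAt u2 (u3 x) x := (hd3 x hx').hasDerivAt hnb
    have := h2'.inner ℝ h3'
    refine this.congr_deriv ?_
    rw [real_inner_self_eq_norm_sq]
    ring
  have hFcont : ContinuousWithinAt F (Ici (0:ℝ)) 0 :=
    (hcu1 0 (mem_Ici.mpr le_rfl)).inner (hcu2 0 (mem_Ici.mpr le_rfl))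
  have key : ∫ x in Ioi (0:ℝ), g x = 0 - F 0 :=
    integral_Ioi_of_hasDerivAt_of_tendsto hFcont hFderiv hgint hdec
  have hF0 : F 0 = 0 := by simp [hF, hbc]
  have hsplit : ∫ x in Ioi (0:ℝ), g x
      = (∫ x in Ioi (0:ℝ), ‖u2 x‖ ^ 2) + ∫ x in Ioi (0:ℝ), (inner ℝ (u1 x) (u3 x) : ℝ) :=
    integral_add h2 hinner
  have heq : (∫ x in Ioi (0:ℝ), ‖u2 x‖ ^ 2)
      = - ∫ x in Ioi (0:ℝ), (inner ℝ (u1 x) (u3 x) : ℝ) := by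
    rw [hF0, sub_zero] at key
    linarith [hsplit ▸ key]
  -- bound by ∫ ‖u1‖‖u3‖
  have hb1 : (∫ x in Ioi (0:ℝ), ‖u2 x‖ ^ 2) ≤ ∫ x in Ioi (0:ℝ), ‖u1 x‖ * ‖u3 x‖ := by
    rw [heq, ← integral_neg]
    refine integral_mono hinner.neg hmul ?_
    intro x
    have := abs_real_inner_le_norm (u1 x) (u3 x)
    have := neg_abs_le (inner ℝ (u1 x) (u3 x) : ℝ)
    simp only [Pi.neg_apply]
    linarith
  -- Cauchy–Schwarz / Hölder
  have hpq : Real.HolderConjugate 2 2 := Real.HolderConjugate.two_two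
  have hmem1 : MemLp (fun x => ‖u1 x‖) (ENNReal.ofReal 2) μ := by
    rw [show ENNReal.ofReal 2 = 2 by norm_num [ENNReal.ofReal_ofNat]]
    exact (memLp_two_iff_integrable_sq hm1.norm).2 h1
  have hmem3 : MemLp (fun x => ‖u3 x‖) (ENNReal.ofReal 2) μ := by
    rw [show ENNReal.ofReal 2 = 2 by norm_num [ENNReal.ofReal_ofNat]]
    exact (memLp_two_iff_integrable_sq hm3.norm).2 h3
  have hcs := integral_mul_le_Lp_mul_Lq_of_nonneg (μ := μ) hpq
    (Filter.Eventually.of_forall fun x => norm_nonneg (u1 x))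
    (Filter.Eventually.of_forall fun x => norm_nonneg (u3 x)) hmem1 hmem3
  have hre1 : (∫ a, ‖u1 a‖ ^ (2:ℝ) ∂μ) = ∫ x in Ioi (0:ℝ), ‖u1 x‖ ^ 2 := by
    simp [Real.rpow_two, hμ]
  have hre3 : (∫ a, ‖u3 a‖ ^ (2:ℝ) ∂μ) = ∫ x in Ioi (0:ℝ), ‖u3 x‖ ^ 2 := by
    simp [Real.rpow_two, hμ]
  rw [hre1, hre3] at hcs
  calc (∫ x in Ioi (0:ℝ), ‖u2 x‖ ^ 2)
      ≤ ∫ x in Ioi (0:ℝ), ‖u1 x‖ * ‖u3 x‖ := hb1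
    _ ≤ (∫ x in Ioi (0:ℝ), ‖u1 x‖ ^ 2) ^ (1/2 : ℝ)
        * (∫ x in Ioi (0:ℝ), ‖u3 x‖ ^ 2) ^ (1/2 : ℝ) := hcs
    _ = Real.sqrt (∫ x in Ioi (0 : ℝ), ‖u1 x‖ ^ 2)
        * Real.sqrt (∫ x in Ioi (0 : ℝ), ‖u3 x‖ ^ 2) := by
        rw [Real.sqrt_eq_rpow, Real.sqrt_eq_rpow]
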